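/- Let R be a (not necessarily commutative) ring, let w be a central element of R, and let d, e, h ∈ R satisfy d² = 0, e² = 0, d·e + e·d = w, and d·h + h·d = 1. Then for every ℓ ≥ 1: d·(h·e)^ℓ·h + (h·e)^ℓ·h·d = (e·h)^ℓ + (h·e)^ℓ − w · Σ_{j=0}^{ℓ−1} (h·e)^{ℓ−1−j} · h · (h·e)^{j} · h. -/
import Mathlib


open Finset

/-- The anticommutator identity
`d (he)^ℓ h + (he)^ℓ h d = (eh)^ℓ + (he)^ℓ − w Σ_{j<ℓ} (he)^{ℓ−1−j} h (he)^j h`. -/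
theorem anticommutator_d_he_pow_h
    {R : Type*} [Ring R] (w d e h : R)
    (hw : ∀ x : R, w * x = x * w)
    (hd2 : d * d = 0) (he2 : e * e = 0)
    (hde : d * e + e * d = w)
    (hdh : d * h + h * d = 1) :
    ∀ ℓ : ℕ, 1 ≤ ℓ →
      d * ((h * e) ^ ℓ * h) + (h * e) ^ ℓ * h * d =
        (e * h) ^ ℓ + (h * e) ^ ℓ -
          w * ∑ j ∈ Finset.range ℓ, (h * e) ^ (ℓ - 1 - j) * h * (h * e) ^ j * h := by
  intro ℓ hℓ
  induction ℓ, hℓ using Nat.le_induction with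
  | base =>
    simp only [pow_one, Finset.sum_range_one, pow_zero, one_mul, Nat.sub_self]
    linear_combination (norm := noncomm_ring) hdh * (e*h) - h * hde * h + h*e*hdh + (hw h) * h
  | succ n hn IH =>
    -- sum recursion
    have hS : (∑ j ∈ Finset.range (n+1), (h*e)^(n+1-1-j)*h*(h*e)^j*h)
        = h*e*(∑ j ∈ Finset.range n, (h*e)^(n-1-j)*h*(h*e)^j*h) + h*(h*e)^n*h := by
      rw [Finset.sum_range_succ, Finset.mul_sum]
      congr 1
      · apply Finset.sum_congr rfl
        intro j hj
        have hj' : j < n := Finset.mem_range.mp hj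
        have : n + 1 - 1 - j = (n - 1 - j) + 1 := by omega
        rw [this, pow_succ']
        noncomm_ring
      · simp
    have hz : h * e * (e * h) ^ n = 0 := by
      obtain ⟨m, rfl⟩ : ∃ m, n = m + 1 := ⟨n - 1, by omega⟩
      rw [pow_succ']
      calc h * e * (e * h * (e * h) ^ m) = h * (e * e) * (h * (e * h) ^ m) := by
            noncomm_ring
        _ = 0 := by rw [he2]; simp
    have shift : ∀ (a b : R) (m : ℕ), a * (b*a)^m = (a*b)^m * a := by
      intro a b m
      induction m with
      | zero => simp
      | succ k ih =>
        rw [pow_succ' (b*a), pow_succ' (a*b), mul_assoc (a*b) ((a*b)^k) a, ← ih]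
        simp only [← mul_assoc]
    set S := ∑ j ∈ Finset.range n, (h*e)^(n-1-j)*h*(h*e)^j*h with hSdef
    rw [hS, pow_succ' (e*h), pow_succ' (h*e)]
    linear_combination (norm := noncomm_ring) hdh * (e * ((h*e)^n * h))
      - h * hde * ((h*e)^n * h) + h*e*IH + hz
      + (hw h) * ((h*e)^n * h) + (hw (h*e)) * S - e * (shift h e n)
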